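/- Let a₁₁, a₂₂ > 0 and a₁₂, a₂₁ be real numbers with a₁₂·a₂₁ ≥ 0 and d := a₁₁a₂₂ − a₁₂a₂₁ > 0. Then for every ξ ∈ ℝ with ξ ≠ 0 and every λ ∈ ℂ that is not a strictly negative real number (i.e. it is not the case that Im λ = 0 and Re λ < 0), one has det(λI − a_π(ξ)) = λ² + (a₁₁ξ⁴ + a₂₂ξ²)λ + d·ξ⁶ ≠ 0. (Parameter-ellipticity of the principal symbol in ℂ ∖ (−∞,0).) -/
import Mathlib


/-- Parameter-ellipticity of the principal symbol in ℂ ∖ (−∞,0): for positive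
`a₁₁, a₂₂`, `a₁₂·a₂₁ ≥ 0` and positive determinant `d = a₁₁a₂₂ − a₁₂a₂₁`, the
determinant `det(λI − a_π(ξ)) = λ² + (a₁₁ξ⁴ + a₂₂ξ²)λ + d·ξ⁶` does not vanish
for `ξ ≠ 0` and `λ` not a strictly negative real number. -/
theorem stmt_0 (a11 a12 a21 a22 : ℝ) (h11 : 0 < a11) (h22 : 0 < a22)
    (hprod : 0 ≤ a12 * a21) (hd : 0 < a11 * a22 - a12 * a21)
    (ξ : ℝ) (hξ : ξ ≠ 0) (lam : ℂ) (hlam : ¬ (lam.im = 0 ∧ lam.re < 0)) :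
    lam ^ 2 + ((a11 * ξ ^ 4 + a22 * ξ ^ 2 : ℝ) : ℂ) * lam
      + (((a11 * a22 - a12 * a21) * ξ ^ 6 : ℝ) : ℂ) ≠ 0 := by
  have hξ2 : 0 < ξ ^ 2 := by positivity
  set b : ℝ := a11 * ξ ^ 4 + a22 * ξ ^ 2 with hbdef
  set c : ℝ := (a11 * a22 - a12 * a21) * ξ ^ 6 with hcdef
  have hbpos : 0 < b := by positivity
  have hcpos : 0 < c := by positivity
  have hdisc : 4 * c ≤ b ^ 2 := by
    have hsq : (0:ℝ) ≤ (a11 * ξ ^ 4 - a22 * ξ ^ 2) ^ 2 := sq_nonneg _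
    have h6 : (0:ℝ) ≤ a12 * a21 * ξ ^ 6 := by positivity
    nlinarith [hsq, h6]
  intro h
  set x := lam.re with hx
  set y := lam.im with hy
  have hre : x ^ 2 - y ^ 2 + b * x + c = 0 := by
    have := congrArg Complex.re h
    simpa [pow_two, Complex.add_re, Complex.mul_re, Complex.ofReal_re,
      Complex.ofReal_im] using this
  have him : 2 * x * y + b * y = 0 := by
    have := congrArg Complex.im h
    simp [pow_two, Complex.add_im, Complex.mul_im, Complex.ofReal_re,
      Complex.ofReal_im] at this
    linarith
  have hy0 : y = 0 := by
    by_contra hy0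
    have h2x : 2 * x + b = 0 := by
      have : y * (2 * x + b) = 0 := by linarith [him]
      rcases mul_eq_zero.mp this with h' | h'
      · exact absurd h' hy0
      · exact h'
    -- x = -b/2, then y² = c - b²/4 ≤ 0, contradiction
    have hxval : x = -b / 2 := by linarith
    have : y ^ 2 = c - b ^ 2 / 4 := by
      rw [hxval] at hre; nlinarith [hre]
    nlinarith [sq_abs y, pow_pos (abs_pos.mpr hy0) 2]
  -- now λ real: x² + bx + c = 0, forces x < 0
  have hxeq : x ^ 2 + b * x + c = 0 := by rw [hy0] at hre; linarith [hre]
  have hxneg : x < 0 := by nlinarith [sq_nonneg x]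
  exact hlam ⟨hy0, hxneg⟩
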